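/- Assume that for every s ∈ S, d(inl s, inr φ(s)) ≤ γ · W_d(κ(inl s), κ(inr φ(s))), and that singletons of S are measurable. If s₁, s₂ ∈ S satisfy φ(s₁) = φ(s₂), ξ({s₁}) > 0 and ξ({s₂}) > 0, then d(inl s₁, inl s₂) ≤ (γ L_P/(1−γ)) · (ξ({s₁})⁻¹ + ξ({s₂})⁻¹). -/

import Mathlib

open MeasureTheory ProbabilityTheory

/-- Total variation distance between two measures on `X`:
the supremum over measurable sets of the absolute difference of their masses. -/
noncomputable def tvDist {X : Type*} [MeasurableSpace X] (μ ν : Measure X) : ℝ :=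
  ⨆ A : {A : Set X // MeasurableSet A}, |(μ A.1).toReal - (ν A.1).toReal|

/-- Dual (Kantorovich) Wasserstein distance between two measures with respect to a cost
function `d`: the supremum over bounded measurable `d`-Lipschitz functions of the absolute
difference of their integrals. -/
noncomputable def wassDual {X : Type*} [MeasurableSpace X] (d : X → X → ℝ)
    (μ ν : Measure X) : ℝ :=
  ⨆ f : {f : X → ℝ // Measurable f ∧ (∃ C, ∀ x, |f x| ≤ C) ∧ ∀ x y, |f x - f y| ≤ d x y},
    |(∫ x, f.1 x ∂μ) - ∫ x, f.1 x ∂ν|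

section Aux

lemma prob_measure_toReal_le_one {X : Type*} [MeasurableSpace X] (μ : Measure X)
    [IsProbabilityMeasure μ] (B : Set X) : (μ B).toReal ≤ 1 := by
  have := ENNReal.toReal_mono (measure_ne_top μ Set.univ) (measure_mono (Set.subset_univ B))
  simpa using this

lemma abs_sub_le_tvDist {X : Type*} [MeasurableSpace X] (μ ν : Measure X)
    [IsProbabilityMeasure μ] [IsProbabilityMeasure ν] {A : Set X} (hA : MeasurableSet A) :
    |(μ A).toReal - (ν A).toReal| ≤ tvDist μ ν := by
  have hbdd : BddAbove (Set.range fun B : {B : Set X // MeasurableSet B} =>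
      |(μ B.1).toReal - (ν B.1).toReal|) := by
    refine ⟨2, ?_⟩
    rintro x ⟨B, rfl⟩
    have h1 : (μ B.1).toReal ≤ 1 := prob_measure_toReal_le_one μ B.1
    have h2 : (ν B.1).toReal ≤ 1 := prob_measure_toReal_le_one ν B.1
    have h3 : (0:ℝ) ≤ (μ B.1).toReal := ENNReal.toReal_nonneg
    have h4 : (0:ℝ) ≤ (ν B.1).toReal := ENNReal.toReal_nonneg
    rw [abs_sub_le_iff]
    constructor <;> linarith
  exact le_ciSup hbdd (⟨A, hA⟩ : {B : Set X // MeasurableSet B})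

lemma tvDist_nonneg {X : Type*} [MeasurableSpace X] (μ ν : Measure X)
    [IsProbabilityMeasure μ] [IsProbabilityMeasure ν] : 0 ≤ tvDist μ ν := by
  have := abs_sub_le_tvDist μ ν MeasurableSet.empty
  simpa using this

lemma tvDist_le_two {X : Type*} [MeasurableSpace X] (μ ν : Measure X)
    [IsProbabilityMeasure μ] [IsProbabilityMeasure ν] : tvDist μ ν ≤ 2 := by
  haveI : Nonempty {B : Set X // MeasurableSet B} := ⟨⟨∅, MeasurableSet.empty⟩⟩
  refine ciSup_le fun B => ?_
  have h1 : (μ B.1).toReal ≤ 1 := prob_measure_toReal_le_one μ B.1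
  have h2 : (ν B.1).toReal ≤ 1 := prob_measure_toReal_le_one ν B.1
  have h3 : (0:ℝ) ≤ (μ B.1).toReal := ENNReal.toReal_nonneg
  have h4 : (0:ℝ) ≤ (ν B.1).toReal := ENNReal.toReal_nonneg
  rw [abs_sub_le_iff]
  constructor <;> linarith

/-- One-sided bound for sums against a function of oscillation at most 1. -/
lemma sum_mul_osc_le {ι : Type*} [Fintype ι] [Nonempty ι] (p q h : ι → ℝ) (c : ℝ)
    (hpq : ∑ b, p b = ∑ b, q b)
    (hosc : ∀ b b', |h b - h b'| ≤ 1)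
    (hc : ∀ A : Finset ι, ∑ b ∈ A, (p b - q b) ≤ c) :
    ∑ b, (p b - q b) * h b ≤ c := by
  obtain ⟨b₀, -, hb₀⟩ := Finset.exists_min_image Finset.univ h
    ⟨Classical.arbitrary ι, Finset.mem_univ _⟩
  have hsum0 : ∑ b, (p b - q b) = 0 := by
    rw [Finset.sum_sub_distrib, hpq, sub_self]
  have key : ∑ b, (p b - q b) * h b = ∑ b, (p b - q b) * (h b - h b₀) := by
    simp only [mul_sub, Finset.sum_sub_distrib, ← Finset.sum_mul, hsum0, zero_mul, sub_zero]
  rw [key]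
  set A : Finset ι := Finset.univ.filter (fun b => q b ≤ p b) with hA
  have hsplit := Finset.sum_filter_add_sum_filter_not Finset.univ (fun b => q b ≤ p b)
    (fun b => (p b - q b) * (h b - h b₀))
  have hA1 : ∑ b ∈ A, (p b - q b) * (h b - h b₀) ≤ ∑ b ∈ A, (p b - q b) := by
    refine Finset.sum_le_sum fun b hb => ?_
    simp only [hA, Finset.mem_filter] at hb
    have h1 : 0 ≤ p b - q b := by linarith [hb.2]
    have h2 : h b - h b₀ ≤ 1 := (le_abs_self _).trans (hosc b b₀)
    calc (p b - q b) * (h b - h b₀) ≤ (p b - q b) * 1 := mul_le_mul_of_nonneg_left h2 h1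
      _ = p b - q b := mul_one _
  have hA2 : ∑ b ∈ Finset.univ.filter (fun b => ¬ q b ≤ p b),
      (p b - q b) * (h b - h b₀) ≤ 0 := by
    refine Finset.sum_nonpos fun b hb => ?_
    simp only [Finset.mem_filter, not_le] at hb
    have h1 : p b - q b ≤ 0 := by linarith [hb.2]
    have h2 : 0 ≤ h b - h b₀ := by linarith [hb₀ b (Finset.mem_univ b)]
    exact mul_nonpos_of_nonpos_of_nonneg h1 h2
  calc ∑ b, (p b - q b) * (h b - h b₀)
      = (∑ b ∈ A, (p b - q b) * (h b - h b₀))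
        + ∑ b ∈ Finset.univ.filter (fun b => ¬ q b ≤ p b), (p b - q b) * (h b - h b₀) := by
        rw [hsplit]
    _ ≤ (∑ b ∈ A, (p b - q b)) + 0 := add_le_add hA1 hA2
    _ = ∑ b ∈ A, (p b - q b) := add_zero _
    _ ≤ c := hc A

lemma sum_measure_finset {Sb : Type*} [Fintype Sb] [MeasurableSpace Sb]
    [MeasurableSingletonClass Sb] (μ : Measure Sb) (A : Finset Sb) :
    ∑ b ∈ A, μ {b} = μ (↑A : Set Sb) := by
  simpa using sum_measure_preimage_singleton (μ := μ) A (f := id) (fun y _ => measurableSet_eq)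

lemma sum_measure_toReal_finset {Sb : Type*} [Fintype Sb] [MeasurableSpace Sb]
    [MeasurableSingletonClass Sb] (μ : Measure Sb) [IsProbabilityMeasure μ] (A : Finset Sb) :
    ∑ b ∈ A, (μ {b}).toReal = (μ (↑A : Set Sb)).toReal := by
  rw [← sum_measure_finset μ A, ENNReal.toReal_sum (fun b _ => measure_ne_top μ _)]

/-- Integrals of a function of oscillation at most 1 differ by at most the TV distance. -/
lemma integral_sub_le_tvDist {Sb : Type*} [Fintype Sb] [Nonempty Sb] [MeasurableSpace Sb]
    [DiscreteMeasurableSpace Sb] (μ ν : Measure Sb) [IsProbabilityMeasure μ]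
    [IsProbabilityMeasure ν] (h : Sb → ℝ) (hosc : ∀ b b', |h b - h b'| ≤ 1) :
    |∫ b, h b ∂μ - ∫ b, h b ∂ν| ≤ tvDist μ ν := by
  rw [integral_fintype (f := h) (Integrable.of_finite), integral_fintype (f := h) (Integrable.of_finite)]
  simp only [measureReal_def]
  have hrw : (∑ b, (μ {b}).toReal • h b) - ∑ b, (ν {b}).toReal • h b
      = ∑ b, ((μ {b}).toReal - (ν {b}).toReal) * h b := by
    rw [← Finset.sum_sub_distrib]
    congr 1 with b
    simp [smul_eq_mul, sub_mul]
  rw [hrw]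
  have hpq : ∑ b, (μ {b}).toReal = ∑ b, (ν {b}).toReal := by
    rw [sum_measure_toReal_finset μ Finset.univ, sum_measure_toReal_finset ν Finset.univ]
    simp
  have hc : ∀ A : Finset Sb, ∑ b ∈ A, ((μ {b}).toReal - (ν {b}).toReal) ≤ tvDist μ ν := by
    intro A
    rw [Finset.sum_sub_distrib, sum_measure_toReal_finset μ A, sum_measure_toReal_finset ν A]
    exact (le_abs_self _).trans (abs_sub_le_tvDist μ ν MeasurableSet.of_discrete)
  have hosc' : ∀ b b', |(fun b => -h b) b - (fun b => -h b) b'| ≤ 1 := by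
    intro b b'
    simp only
    rw [show -h b - -h b' = -(h b - h b') by ring, abs_neg]
    exact hosc b b'
  have hlow := sum_mul_osc_le (fun b => (μ {b}).toReal) (fun b => (ν {b}).toReal)
    (fun b => -h b) (tvDist μ ν) hpq hosc' hc
  have hup := sum_mul_osc_le (fun b => (μ {b}).toReal) (fun b => (ν {b}).toReal)
    h (tvDist μ ν) hpq hosc hc
  simp only [mul_neg, Finset.sum_neg_distrib] at hlow
  rw [abs_le]
  constructor <;> linarith

/-- The dual Wasserstein distance between the pushforwards on the sum space is bounded by the
embedding error plus the total variation of the abstract transitions. -/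
lemma wassDual_le_bound {S Sb : Type*} [MeasurableSpace S] [Fintype Sb] [Nonempty Sb]
    [MeasurableSpace Sb] [DiscreteMeasurableSpace Sb]
    (d : (S ⊕ Sb) → (S ⊕ Sb) → ℝ) (hd01 : ∀ x y, d x y ∈ Set.Icc (0:ℝ) 1)
    (μ : Measure S) [IsProbabilityMeasure μ] (ν : Measure Sb) [IsProbabilityMeasure ν]
    (φ : S → Sb) (hφ : Measurable φ)
    (hgmeas : Measurable fun s => d (Sum.inl s) (Sum.inr (φ s))) :
    wassDual d (μ.map Sum.inl) (ν.map Sum.inr) ≤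
      (∫ t, d (Sum.inl t) (Sum.inr (φ t)) ∂μ) + tvDist (μ.map φ) ν := by
  haveI : IsProbabilityMeasure (μ.map φ) := Measure.isProbabilityMeasure_map hφ.aemeasurable
  haveI : Nonempty {f : (S ⊕ Sb) → ℝ // Measurable f ∧ (∃ C, ∀ x, |f x| ≤ C) ∧
      ∀ x y, |f x - f y| ≤ d x y} :=
    ⟨⟨fun _ => 0, measurable_const, ⟨0, fun x => by simp⟩,
      fun x y => by simpa using (hd01 x y).1⟩⟩
  refine ciSup_le ?_
  rintro ⟨f, hfm, ⟨C, hC⟩, hflip⟩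
  simp only
  rw [integral_map measurable_inl.aemeasurable hfm.aestronglyMeasurable,
    integral_map measurable_inr.aemeasurable hfm.aestronglyMeasurable]
  have int1 : Integrable (fun t => f (Sum.inl t)) μ := by
    refine Integrable.mono' (integrable_const C) ((hfm.comp measurable_inl).aestronglyMeasurable)
      (Filter.Eventually.of_forall fun t => ?_)
    simpa [Real.norm_eq_abs] using hC (Sum.inl t)
  have int2 : Integrable (fun t => f (Sum.inr (φ t))) μ := by
    refine Integrable.mono' (integrable_const C)
      ((hfm.comp (measurable_inr.comp hφ)).aestronglyMeasurable)
      (Filter.Eventually.of_forall fun t => ?_)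
    simpa [Real.norm_eq_abs] using hC (Sum.inr (φ t))
  have intg : Integrable (fun t => d (Sum.inl t) (Sum.inr (φ t))) μ := by
    refine Integrable.mono' (integrable_const 1) hgmeas.aestronglyMeasurable
      (Filter.Eventually.of_forall fun t => ?_)
    rw [Real.norm_eq_abs, abs_of_nonneg (hd01 _ _).1]
    exact (hd01 _ _).2
  calc |(∫ t, f (Sum.inl t) ∂μ) - ∫ b, f (Sum.inr b) ∂ν|
      ≤ |(∫ t, f (Sum.inl t) ∂μ) - ∫ t, f (Sum.inr (φ t)) ∂μ|
        + |(∫ t, f (Sum.inr (φ t)) ∂μ) - ∫ b, f (Sum.inr b) ∂ν| := abs_sub_le _ _ _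
    _ ≤ (∫ t, d (Sum.inl t) (Sum.inr (φ t)) ∂μ) + tvDist (μ.map φ) ν := by
        gcongr
        · rw [← integral_sub int1 int2]
          calc |∫ t, (f (Sum.inl t) - f (Sum.inr (φ t))) ∂μ|
              ≤ ∫ t, |f (Sum.inl t) - f (Sum.inr (φ t))| ∂μ := by
                simpa [Real.norm_eq_abs] using
                  norm_integral_le_integral_norm (fun t => f (Sum.inl t) - f (Sum.inr (φ t))) (μ := μ)
            _ ≤ ∫ t, d (Sum.inl t) (Sum.inr (φ t)) ∂μ := by
                refine integral_mono (int1.sub int2).abs intg fun t => hflip _ _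
        · have hmap : ∫ t, f (Sum.inr (φ t)) ∂μ = ∫ b, f (Sum.inr b) ∂(μ.map φ) :=
            (integral_map hφ.aemeasurable
              ((hfm.comp measurable_inr).aestronglyMeasurable)).symm
          rw [hmap]
          refine integral_sub_le_tvDist (μ.map φ) ν (fun b => f (Sum.inr b)) fun b b' => ?_
          exact (hflip _ _).trans (hd01 (Sum.inr b) (Sum.inr b')).2

end Aux

/-- Abstraction-quality bound for the label-based bisimulation pseudometric: two states with
the same embedding and positive stationary mass are within bisimulation distance
`(γ·L_P/(1-γ))·(ξ{s₁}⁻¹ + ξ{s₂}⁻¹)` of each other. -/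
theorem bisimulation_closeness_labels
    {S : Type*} [MeasurableSpace S] [MeasurableSingletonClass S]
    {Sb : Type*} [Fintype Sb] [Nonempty Sb] [MeasurableSpace Sb] [DiscreteMeasurableSpace Sb]
    (P : Kernel S S) [IsMarkovKernel P]
    (Pb : Sb → PMF Sb)
    (φ : S → Sb) (hφ : Measurable φ)
    (ξ : Measure S) [IsProbabilityMeasure ξ]
    (hinv : ∀ A : Set S, MeasurableSet A → ξ A = ∫⁻ s, P s A ∂ξ)
    (γ : ℝ) (hγ0 : 0 ≤ γ) (hγ1 : γ < 1)
    (d : (S ⊕ Sb) → (S ⊕ Sb) → ℝ)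
    (hdmeas : Measurable (Function.uncurry d))
    (hd01 : ∀ x y, d x y ∈ Set.Icc (0 : ℝ) 1)
    (hdrefl : ∀ x, d x x = 0)
    (hdsymm : ∀ x y, d x y = d y x)
    (hdtri : ∀ x y z, d x z ≤ d x y + d y z)
    (hfix : ∀ s : S,
      d (Sum.inl s) (Sum.inr (φ s)) ≤
        γ * wassDual d (((P s).map Sum.inl : Measure (S ⊕ Sb)))
          (((Pb (φ s)).toMeasure.map Sum.inr : Measure (S ⊕ Sb))))
    (s₁ s₂ : S) (hφeq : φ s₁ = φ s₂)
    (hs₁ : 0 < ξ {s₁}) (hs₂ : 0 < ξ {s₂}) :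
    d (Sum.inl s₁) (Sum.inl s₂) ≤
      (γ * (∫ s, tvDist ((P s).map φ) ((Pb (φ s)).toMeasure) ∂ξ) / (1 - γ)) *
        ((ξ {s₁}).toReal⁻¹ + (ξ {s₂}).toReal⁻¹) := by
  -- notation
  set g : S → ℝ := fun s => d (Sum.inl s) (Sum.inr (φ s)) with hgdef
  set T : S → ℝ := fun s => tvDist ((P s).map φ) ((Pb (φ s)).toMeasure) with hTdef
  have hgmeas : Measurable g :=
    hdmeas.comp (measurable_inl.prodMk (measurable_inr.comp hφ))
  have hg0 : ∀ s, 0 ≤ g s := fun s => (hd01 _ _).1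
  have hg1 : ∀ s, g s ≤ 1 := fun s => (hd01 _ _).2
  haveI : ∀ s, IsProbabilityMeasure ((P s).map φ) := fun s =>
    Measure.isProbabilityMeasure_map hφ.aemeasurable
  have hT0 : ∀ s, 0 ≤ T s := fun s => tvDist_nonneg _ _
  have hT2 : ∀ s, T s ≤ 2 := fun s => tvDist_le_two _ _
  -- measurability of T
  have hTmeas : Measurable T := by
    have h1 : ∀ A : {A : Set Sb // MeasurableSet A},
        Measurable fun s => |(((P s).map φ) A.1).toReal - (((Pb (φ s)).toMeasure) A.1).toReal| := by
      intro A
      have hm1 : Measurable fun s => (((P s).map φ) A.1).toReal := by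
        have : ∀ s, ((P s).map φ) A.1 = P s (φ ⁻¹' A.1) := fun s =>
          Measure.map_apply hφ A.2
        simp only [this]
        exact (P.measurable_coe (hφ A.2)).ennreal_toReal
      have hm2 : Measurable fun s => (((Pb (φ s)).toMeasure) A.1).toReal :=
        (Measurable.of_discrete (f := fun b : Sb => (((Pb b).toMeasure) A.1).toReal)).comp hφ
      exact (hm1.sub hm2).abs
    exact Measurable.iSup h1
  -- pointwise bound
  have hkey : ∀ s, g s ≤ γ * ((∫ t, g t ∂(P s)) + T s) := by
    intro s
    refine (hfix s).trans (mul_le_mul_of_nonneg_left ?_ hγ0)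
    exact wassDual_le_bound d hd01 (P s) ((Pb (φ s)).toMeasure) φ hφ hgmeas
  -- ENNReal versions
  set gE : S → ENNReal := fun s => ENNReal.ofReal (g s) with hgEdef
  have hgEmeas : Measurable gE := hgmeas.ennreal_ofReal
  have hgE1 : ∀ s, gE s ≤ 1 := fun s => ENNReal.ofReal_le_one.mpr (hg1 s)
  have hlintle : ∀ (μ : Measure S) [IsProbabilityMeasure μ], ∫⁻ t, gE t ∂μ ≤ 1 := by
    intro μ _
    calc ∫⁻ t, gE t ∂μ ≤ ∫⁻ _, 1 ∂μ := lintegral_mono hgE1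
      _ = 1 := by simp
  have hlin : ∀ (μ : Measure S), ∫ t, g t ∂μ = (∫⁻ t, gE t ∂μ).toReal := fun μ =>
    integral_eq_lintegral_of_nonneg_ae (Filter.Eventually.of_forall hg0)
      hgmeas.aestronglyMeasurable
  have hkeyE : ∀ s, gE s ≤ ENNReal.ofReal γ * ((∫⁻ t, gE t ∂(P s)) + ENNReal.ofReal (T s)) := by
    intro s
    calc gE s ≤ ENNReal.ofReal (γ * ((∫ t, g t ∂(P s)) + T s)) :=
          ENNReal.ofReal_le_ofReal (hkey s)
      _ = ENNReal.ofReal γ * (ENNReal.ofReal (∫ t, g t ∂(P s)) + ENNReal.ofReal (T s)) := by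
          rw [ENNReal.ofReal_mul hγ0,
            ENNReal.ofReal_add (integral_nonneg hg0) (hT0 s)]
      _ = ENNReal.ofReal γ * ((∫⁻ t, gE t ∂(P s)) + ENNReal.ofReal (T s)) := by
          rw [hlin (P s), ENNReal.ofReal_toReal
            (ne_of_lt (lt_of_le_of_lt (hlintle (P s)) ENNReal.one_lt_top))]
  -- integrate over ξ, use invariance
  have hmeaslin : Measurable fun s => ∫⁻ t, gE t ∂(P s) := Measurable.lintegral_kernel hgEmeas
  have hbind : ξ.bind (fun s => P s) = ξ := by
    ext A hA
    rw [Measure.bind_apply hA P.measurable.aemeasurable]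
    exact (hinv A hA).symm
  have hinvint : ∫⁻ s, (∫⁻ t, gE t ∂(P s)) ∂ξ = ∫⁻ s, gE s ∂ξ := by
    conv_rhs => rw [← hbind]
    rw [Measure.lintegral_bind P.measurable.aemeasurable hgEmeas.aemeasurable]
  set I : ENNReal := ∫⁻ s, gE s ∂ξ with hIdef
  set L : ENNReal := ∫⁻ s, ENNReal.ofReal (T s) ∂ξ with hLdef
  have hI1 : I ≤ 1 := hlintle ξ
  have hL2 : L ≤ 2 := by
    calc L ≤ ∫⁻ _, (2 : ENNReal) ∂ξ := by
          refine lintegral_mono fun s => ?_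
          calc ENNReal.ofReal (T s) ≤ ENNReal.ofReal 2 := ENNReal.ofReal_le_ofReal (hT2 s)
            _ = 2 := by norm_num
      _ = 2 := by simp
  have hItop : I ≠ ⊤ := ne_of_lt (lt_of_le_of_lt hI1 ENNReal.one_lt_top)
  have hLtop : L ≠ ⊤ := ne_of_lt (lt_of_le_of_lt hL2 (by norm_num))
  have hIneq : I ≤ ENNReal.ofReal γ * (I + L) := by
    calc I ≤ ∫⁻ s, ENNReal.ofReal γ * ((∫⁻ t, gE t ∂(P s)) + ENNReal.ofReal (T s)) ∂ξ :=
          lintegral_mono hkeyE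
      _ = ENNReal.ofReal γ * ((∫⁻ s, ∫⁻ t, gE t ∂(P s) ∂ξ) + L) := by
          rw [lintegral_const_mul (f := fun s => (∫⁻ t, gE t ∂(P s)) + ENNReal.ofReal (T s)) _
              (hmeaslin.add hTmeas.ennreal_ofReal),
            lintegral_add_left hmeaslin]
      _ = ENNReal.ofReal γ * (I + L) := by rw [hinvint]
  -- pass to the reals
  set i : ℝ := I.toReal with hidef
  set l : ℝ := L.toReal with hldef
  have hlT : ∫ s, T s ∂ξ = l :=
    integral_eq_lintegral_of_nonneg_ae (Filter.Eventually.of_forall hT0)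
      hTmeas.aestronglyMeasurable
  have hi : i ≤ γ * (i + l) := by
    have h := ENNReal.toReal_mono
      (ENNReal.mul_ne_top ENNReal.ofReal_ne_top (ENNReal.add_ne_top.mpr ⟨hItop, hLtop⟩)) hIneq
    rwa [ENNReal.toReal_mul, ENNReal.toReal_ofReal hγ0, ENNReal.toReal_add hItop hLtop] at h
  have hl0 : 0 ≤ l := ENNReal.toReal_nonneg
  have h1γ : 0 < 1 - γ := by linarith
  have hic : i ≤ γ * l / (1 - γ) := by
    rw [le_div_iff₀ h1γ]
    nlinarith [hi]
  -- per-state bound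
  have hstate : ∀ s : S, 0 < ξ {s} → g s ≤ i * (ξ {s}).toReal⁻¹ := by
    intro s hs
    have hsm : gE s * ξ {s} ≤ I := by
      rw [← lintegral_singleton gE s]
      exact lintegral_mono' Measure.restrict_le_self le_rfl
    have hreal : g s * (ξ {s}).toReal ≤ i := by
      have h := ENNReal.toReal_mono hItop hsm
      rwa [ENNReal.toReal_mul, ENNReal.toReal_ofReal (hg0 s)] at h
    have hpos : 0 < (ξ {s}).toReal := ENNReal.toReal_pos hs.ne' (measure_ne_top ξ _)
    rw [← div_eq_mul_inv, le_div_iff₀ hpos]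
    exact hreal
  have hb1 := hstate s₁ hs₁
  have hb2 := hstate s₂ hs₂
  have ha1 : (0:ℝ) ≤ (ξ {s₁}).toReal⁻¹ := inv_nonneg.mpr ENNReal.toReal_nonneg
  have ha2 : (0:ℝ) ≤ (ξ {s₂}).toReal⁻¹ := inv_nonneg.mpr ENNReal.toReal_nonneg
  have htri : d (Sum.inl s₁) (Sum.inl s₂) ≤ g s₁ + g s₂ := by
    calc d (Sum.inl s₁) (Sum.inl s₂)
        ≤ d (Sum.inl s₁) (Sum.inr (φ s₁)) + d (Sum.inr (φ s₁)) (Sum.inl s₂) := hdtri _ _ _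
      _ = g s₁ + g s₂ := by
          show d (Sum.inl s₁) (Sum.inr (φ s₁)) + d (Sum.inr (φ s₁)) (Sum.inl s₂)
              = d (Sum.inl s₁) (Sum.inr (φ s₁)) + d (Sum.inl s₂) (Sum.inr (φ s₂))
          rw [hdsymm (Sum.inr (φ s₁)) (Sum.inl s₂), hφeq]
  have hgoal : (γ * (∫ s, T s ∂ξ) / (1 - γ)) = γ * l / (1 - γ) := by rw [hlT]
  calc d (Sum.inl s₁) (Sum.inl s₂) ≤ g s₁ + g s₂ := htri
    _ ≤ i * (ξ {s₁}).toReal⁻¹ + i * (ξ {s₂}).toReal⁻¹ := add_le_add hb1 hb2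
    _ ≤ (γ * l / (1 - γ)) * (ξ {s₁}).toReal⁻¹ + (γ * l / (1 - γ)) * (ξ {s₂}).toReal⁻¹ := by
        gcongr <;> assumption
    _ = (γ * l / (1 - γ)) * ((ξ {s₁}).toReal⁻¹ + (ξ {s₂}).toReal⁻¹) := by ring
    _ = (γ * (∫ s, T s ∂ξ) / (1 - γ)) * ((ξ {s₁}).toReal⁻¹ + (ξ {s₂}).toReal⁻¹) := by
        rw [hgoal]
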